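/- Let Γ₋(t, z) be invertible and of the form Id + O(z⁻¹), and suppose the jump matrix has the form J(t,z) = g(t,z)⁻¹γ(z) with g(t,·) entire (only nonnegative powers of z) and invertible. Then Ξ_t := (∂_t J) J⁻¹ = -g⁻¹ ∂_t g has only nonnegative powers of z, and consequently the contour integral ∮ Tr(Ξ_{t'} ∂_z Ξ_t - (∂_z Ξ_{t'}) Ξ_t) dz/(2πi) vanishes; hence the Malgrange form ω_M is closed. -/

import Mathlib

open LaurentPolynomial

/-- The `k`-th Fourier (Laurent) coefficient of a matrix-valued loop. -/
noncomputable def matCoeff {n : ℕ} (M : Matrix (Fin n) (Fin n) (LaurentPolynomial ℂ))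
    (k : ℤ) : Matrix (Fin n) (Fin n) ℂ :=
  Matrix.of fun i j => (M i j).coeff k

/-- Formal `z`-derivative of a Laurent polynomial. -/
noncomputable def lderiv (p : LaurentPolynomial ℂ) : LaurentPolynomial ℂ :=
  p.coeff.sum fun k a => LaurentPolynomial.C (k • a) * LaurentPolynomial.T (k - 1)

lemma lp_mul_nonneg {p q : LaurentPolynomial ℂ}
    (hp : ∀ k : ℤ, k < 0 → p.coeff k = 0) (hq : ∀ k : ℤ, k < 0 → q.coeff k = 0)
    {k : ℤ} (hk : k < 0) : (p * q).coeff k = 0 := by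
  rw [AddMonoidAlgebra.coeff_mul]
  apply Finset.sum_eq_zero
  intro a ha
  apply Finset.sum_eq_zero
  intro b hb
  have hpa : (0:ℤ) ≤ a := le_of_not_gt fun h => (Finsupp.mem_support_iff.mp ha) (hp a h)
  have hqb : (0:ℤ) ≤ b := le_of_not_gt fun h => (Finsupp.mem_support_iff.mp hb) (hq b h)
  have : a + b ≠ k := by omega
  simp [this]

lemma lp_lderiv_nonneg {p : LaurentPolynomial ℂ}
    (hp : ∀ k : ℤ, k < 0 → p.coeff k = 0) {k : ℤ} (hk : k < 0) : (lderiv p).coeff k = 0 := by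
  unfold lderiv
  rw [AddMonoidAlgebra.coeff_finsuppSum, Finsupp.sum_apply]
  apply Finset.sum_eq_zero
  intro m hm
  have hm0 : (0:ℤ) ≤ m := le_of_not_gt fun h => (Finsupp.mem_support_iff.mp hm) (hp m h)
  show ((LaurentPolynomial.C (m • p.coeff m) * LaurentPolynomial.T (m - 1) : LaurentPolynomial ℂ)).coeff k = 0
  rw [← LaurentPolynomial.single_eq_C_mul_T, AddMonoidAlgebra.coeff_single, Finsupp.single_apply]
  split_ifs with h
  · have : m = 0 := by omega
    simp [this]
  · rfl

lemma entry_nonneg {n : ℕ} {M : Matrix (Fin n) (Fin n) (LaurentPolynomial ℂ)}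
    (h : ∀ k : ℤ, k < 0 → matCoeff M k = 0) (i j : Fin n) :
    ∀ k : ℤ, k < 0 → (M i j).coeff k = 0 := by
  intro k hk
  have := congrFun (congrFun (h k hk) i) j
  simpa [matCoeff] using this

lemma matMul_nonneg {n : ℕ} {A B : Matrix (Fin n) (Fin n) (LaurentPolynomial ℂ)}
    (hA : ∀ k : ℤ, k < 0 → matCoeff A k = 0) (hB : ∀ k : ℤ, k < 0 → matCoeff B k = 0) :
    ∀ k : ℤ, k < 0 → matCoeff (A * B) k = 0 := by
  intro k hk
  ext i j
  simp only [matCoeff, Matrix.of_apply, Matrix.mul_apply, Matrix.zero_apply,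
    ]
  rw [AddMonoidAlgebra.coeff_sum, Finsupp.finset_sum_apply]
  exact Finset.sum_eq_zero fun l _ =>
    lp_mul_nonneg (entry_nonneg hA i l) (entry_nonneg hB l j) hk

/-- Lemma 2.8 of Cafasso–Wu (closedness of the Malgrange form): for a jump
matrix `J = g⁻¹γ` with `g` entire (only nonnegative powers of `z`, as is its
inverse) and `t`-derivatives `∂_t J = ∂_t(g⁻¹)·γ = -g⁻¹(∂_t g)g⁻¹γ`, the
quantity `Ξ_t := (∂_t J)J⁻¹` equals `-g⁻¹∂_t g`, hence has only nonnegative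
powers of `z`; consequently
`∮ Tr(Ξ_{t'} ∂_z Ξ_t − (∂_z Ξ_{t'})Ξ_t) dz/(2πi) = 0`. -/
theorem malgrange_form_closed {n : ℕ}
    (g γ Dg Dg' DJ DJ' : Matrix (Fin n) (Fin n) (LaurentPolynomial ℂ))
    (hgu : IsUnit g) (hγu : IsUnit γ)
    -- `g` is entire and invertible: `g` and `g⁻¹` have only nonnegative modes
    (hgpos : ∀ k : ℤ, k < 0 → matCoeff g k = 0)
    (hginvpos : ∀ k : ℤ, k < 0 → matCoeff (Ring.inverse g) k = 0)
    -- the `t`- and `t'`-derivatives of `g` have only nonnegative modes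
    (hDgpos : ∀ k : ℤ, k < 0 → matCoeff Dg k = 0)
    (hDg'pos : ∀ k : ℤ, k < 0 → matCoeff Dg' k = 0)
    -- Leibniz rule for `∂_t J` and `∂_{t'} J` with `J = g⁻¹γ`, `∂γ = 0`
    (hDJ : DJ = -(Ring.inverse g * Dg * (Ring.inverse g * γ)))
    (hDJ' : DJ' = -(Ring.inverse g * Dg' * (Ring.inverse g * γ))) :
    DJ * Ring.inverse (Ring.inverse g * γ) = -(Ring.inverse g * Dg) ∧
    (∀ k : ℤ, k < 0 → matCoeff (DJ * Ring.inverse (Ring.inverse g * γ)) k = 0) ∧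
    (Matrix.trace
      ((DJ' * Ring.inverse (Ring.inverse g * γ)) *
          (DJ * Ring.inverse (Ring.inverse g * γ)).map lderiv
        - (DJ' * Ring.inverse (Ring.inverse g * γ)).map lderiv *
          (DJ * Ring.inverse (Ring.inverse g * γ)))).coeff (-1) = 0 := by
  have hinv : IsUnit (Ring.inverse g * γ) := (isUnit_ringInverse.mpr hgu).mul hγu
  have h1 : DJ * Ring.inverse (Ring.inverse g * γ) = -(Ring.inverse g * Dg) := by
    rw [hDJ, neg_mul, mul_assoc, Ring.mul_inverse_cancel _ hinv, mul_one]
  have h1' : DJ' * Ring.inverse (Ring.inverse g * γ) = -(Ring.inverse g * Dg') := by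
    rw [hDJ', neg_mul, mul_assoc, Ring.mul_inverse_cancel _ hinv, mul_one]
  have hneg : ∀ (M : Matrix (Fin n) (Fin n) (LaurentPolynomial ℂ)),
      (∀ k : ℤ, k < 0 → matCoeff M k = 0) → ∀ k : ℤ, k < 0 → matCoeff (-M) k = 0 := by
    intro M hM k hk
    ext i j
    simp only [matCoeff, Matrix.of_apply, Matrix.neg_apply, Matrix.zero_apply]
    rw [AddMonoidAlgebra.coeff_neg, Finsupp.neg_apply]
    rw [entry_nonneg hM i j k hk, neg_zero]
  have hB : ∀ k : ℤ, k < 0 → matCoeff (DJ * Ring.inverse (Ring.inverse g * γ)) k = 0 := by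
    rw [h1]; exact hneg _ (matMul_nonneg hginvpos hDgpos)
  have hA : ∀ k : ℤ, k < 0 → matCoeff (DJ' * Ring.inverse (Ring.inverse g * γ)) k = 0 := by
    rw [h1']; exact hneg _ (matMul_nonneg hginvpos hDg'pos)
  have hmap : ∀ (M : Matrix (Fin n) (Fin n) (LaurentPolynomial ℂ)),
      (∀ k : ℤ, k < 0 → matCoeff M k = 0) →
      ∀ k : ℤ, k < 0 → matCoeff (M.map lderiv) k = 0 := by
    intro M hM k hk
    ext i j
    simp only [matCoeff, Matrix.of_apply, Matrix.map_apply, Matrix.zero_apply]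
    exact lp_lderiv_nonneg (entry_nonneg hM i j) hk
  refine ⟨h1, hB, ?_⟩
  have hP1 := matMul_nonneg hA (hmap _ hB)
  have hP2 := matMul_nonneg (hmap _ hA) hB
  rw [Matrix.trace, AddMonoidAlgebra.coeff_sum, Finsupp.finset_sum_apply]
  refine Finset.sum_eq_zero fun i _ => ?_
  have e1 := entry_nonneg hP1 i i (-1) (by norm_num)
  have e2 := entry_nonneg hP2 i i (-1) (by norm_num)
  simp only [Matrix.diag_apply, Matrix.sub_apply]
  rw [AddMonoidAlgebra.coeff_sub, Finsupp.sub_apply]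
  rw [e1, e2, sub_zero]
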